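/- Positive lower bound for the Maupertuis functional: let h < 0, r ∈ (0, r_LJ), q ∈ ℝ² with |q| = r, and let H_coll^q be the set of H¹ paths u : [0,1] → ℝ² with u(0)=q, u(1)=0, |u(s)| ≤ r for all s. Then for every u ∈ H_coll^q, M_h(u) = (1/2)∫₀¹|u̇|² · ∫₀¹(h+V(u)) ≥ −αhr²/(2(2−α)) > 0. -/

import Mathlib

open Set MeasureTheory intervalIntegral

noncomputable def Vpot (α : ℝ) (U : EuclideanSpace ℝ (Fin 2) → ℝ)
    (x : EuclideanSpace ℝ (Fin 2)) : ℝ :=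
  ‖x‖ ^ (-α) * U (‖x‖⁻¹ • x)

/-- Positive lower bound for the Maupertuis functional on collision paths:
for `u ∈ H_coll^q` with `|q| = r < r_LJ`,
`M_h(u) = (1/2)∫₀¹|u̇|² · ∫₀¹(h+V(u)) ≥ −αhr²/(2(2−α)) > 0`. -/
theorem maupertuis_lower_bound
    (α h Umin r : ℝ) (hα : α ∈ Set.Ioo (0:ℝ) 2) (hh : h < 0)
    (U : EuclideanSpace ℝ (Fin 2) → ℝ) (hUcont : Continuous U)
    (hUmin : ∀ s : EuclideanSpace ℝ (Fin 2), ‖s‖ = 1 → Umin ≤ U s)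
    (hUminpos : 0 < Umin)
    (hr : 0 < r) (hrLJ : r < ((2 - α) * Umin / (-2 * h)) ^ (1/α))
    (q : EuclideanSpace ℝ (Fin 2)) (hq : ‖q‖ = r)
    (u u' : ℝ → EuclideanSpace ℝ (Fin 2))
    (hu0 : u 0 = q) (hu1 : u 1 = 0)
    (hderiv : ∀ s ∈ Ioo (0:ℝ) 1, HasDerivAt u (u' s) s)
    (hcont : ContinuousOn u (Icc 0 1))
    (hbound : ∀ s ∈ Icc (0:ℝ) 1, ‖u s‖ ≤ r)
    (hae : ∀ᵐ s, s ∈ Icc (0:ℝ) 1 → u s ≠ 0)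
    (hL2 : IntervalIntegrable (fun s => ‖u' s‖ ^ 2) volume 0 1)
    (hVint : IntervalIntegrable (fun s => h + Vpot α U (u s)) volume 0 1) :
    ((1/2) * ∫ s in (0:ℝ)..1, ‖u' s‖ ^ 2) *
        (∫ s in (0:ℝ)..1, (h + Vpot α U (u s))) ≥
      -α * h * r ^ 2 / (2 * (2 - α)) ∧
    (0:ℝ) < -α * h * r ^ 2 / (2 * (2 - α)) := by
  obtain ⟨hα0, hα2⟩ := hα
  have h2α : (0:ℝ) < 2 - α := by linarith
  set c : ℝ := -(α * h) / (2 - α) with hc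
  have hcpos : 0 < c := div_pos (by nlinarith) h2α
  -- measurability of u'
  have hmeas : AEStronglyMeasurable u' (volume.restrict (Set.uIoc (0:ℝ) 1)) := by
    rw [uIoc_of_le zero_le_one]
    have hne1 : ∀ᵐ s : ℝ ∂volume, s ≠ (1:ℝ) := by
      rw [ae_iff]
      simp only [ne_eq, not_not, Set.setOf_eq_eq_singleton]
      exact Real.volume_singleton
    refine (stronglyMeasurable_deriv u).aestronglyMeasurable.restrict.congr ?_
    filter_upwards [ae_restrict_mem measurableSet_Ioc, ae_restrict_of_ae hne1]
      with s hs hne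
    exact (hderiv s ⟨hs.1, lt_of_le_of_ne hs.2 hne⟩).deriv
  -- integrability of u'
  have hdom : IntervalIntegrable (fun s => ‖u' s‖ ^ 2 + 1) volume 0 1 :=
    hL2.add intervalIntegrable_const
  have hint : IntervalIntegrable u' volume 0 1 := by
    refine hdom.mono_fun hmeas ?_
    filter_upwards with s
    have h0 : (0:ℝ) ≤ ‖u' s‖ := norm_nonneg _
    have : ‖u' s‖ ≤ ‖u' s‖ ^ 2 + 1 := by nlinarith [sq_nonneg (‖u' s‖ - 1)]
    calc ‖u' s‖ ≤ ‖u' s‖ ^ 2 + 1 := this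
      _ ≤ ‖‖u' s‖ ^ 2 + 1‖ := le_abs_self _
  -- fundamental theorem of calculus
  have hftc : ∫ s in (0:ℝ)..1, u' s = u 1 - u 0 :=
    integral_eq_sub_of_hasDerivAt_of_le zero_le_one hcont hderiv hint
  have h1 : r ≤ ∫ s in (0:ℝ)..1, ‖u' s‖ := by
    have := intervalIntegral.norm_integral_le_integral_norm (f := u') (a := (0:ℝ))
      (b := 1) (μ := volume) zero_le_one
    rw [hftc, hu0, hu1] at this
    simpa [hq] using this
  -- lower bound r^2 ≤ ∫ ‖u'‖^2
  have key : r ^ 2 ≤ ∫ s in (0:ℝ)..1, ‖u' s‖ ^ 2 := by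
    have hn : IntervalIntegrable (fun s => ‖u' s‖) volume 0 1 := hint.norm
    have h2 : ∫ s in (0:ℝ)..1, (2 * r * ‖u' s‖) ≤
        ∫ s in (0:ℝ)..1, (‖u' s‖ ^ 2 + r ^ 2) := by
      refine integral_mono_on zero_le_one (hn.const_mul _)
        (hL2.add intervalIntegrable_const) ?_
      intro s _
      nlinarith [sq_nonneg (‖u' s‖ - r)]
    rw [intervalIntegral.integral_const_mul, intervalIntegral.integral_add hL2
      intervalIntegrable_const] at h2
    simp only [intervalIntegral.integral_const, smul_eq_mul, sub_zero, one_mul] at h2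
    nlinarith
  -- pointwise lower bound of the potential term
  have hVlb : ∀ᵐ s ∂(volume.restrict (Icc (0:ℝ) 1)),
      c ≤ h + Vpot α U (u s) := by
    have hrpow : r ^ α < (2 - α) * Umin / (-2 * h) := by
      have hKpos : (0:ℝ) < (2 - α) * Umin / (-2 * h) :=
        div_pos (mul_pos h2α hUminpos) (by linarith)
      calc r ^ α < (((2 - α) * Umin / (-2 * h)) ^ (1/α)) ^ α :=
            Real.rpow_lt_rpow hr.le hrLJ hα0
        _ = (2 - α) * Umin / (-2 * h) := by
            rw [← Real.rpow_mul hKpos.le, one_div, inv_mul_cancel₀ hα0.ne',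
              Real.rpow_one]
    filter_upwards [ae_restrict_of_ae hae, ae_restrict_mem measurableSet_Icc]
      with s hs0 hs
    have hune : u s ≠ 0 := hs0 hs
    have hx : (0:ℝ) < ‖u s‖ := norm_pos_iff.2 hune
    have hxr : ‖u s‖ ≤ r := hbound s hs
    have hU : Umin ≤ U (‖u s‖⁻¹ • u s) := by
      refine hUmin _ ?_
      rw [norm_smul, norm_inv, norm_norm, inv_mul_cancel₀ hx.ne']
    have h3 : r ^ (-α) ≤ ‖u s‖ ^ (-α) :=
      Real.rpow_le_rpow_of_nonpos hx hxr (by linarith)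
    have h4 : r ^ (-α) * Umin ≤ Vpot α U (u s) :=
      mul_le_mul h3 hU hUminpos.le (Real.rpow_nonneg (norm_nonneg _) _)
    have h5 : -2 * h / (2 - α) ≤ r ^ (-α) * Umin := by
      have hra : (0:ℝ) < r ^ α := Real.rpow_pos_of_pos hr α
      have h6 : r ^ α * (-2 * h) < (2 - α) * Umin :=
        (lt_div_iff₀ (by linarith)).mp hrpow
      rw [Real.rpow_neg hr.le]
      rw [div_le_iff₀ h2α, inv_mul_eq_div, div_mul_eq_mul_div, le_div_iff₀ hra]
      nlinarith
    have hceq : c = h + (-2 * h / (2 - α)) := by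
      field_simp [hc]
      rw [hc]; field_simp; ring
    rw [hceq]
    linarith
  have hB : c ≤ ∫ s in (0:ℝ)..1, (h + Vpot α U (u s)) := by
    have := integral_mono_ae_restrict (a := (0:ℝ)) (b := 1) (μ := volume)
      (f := fun _ => c) (g := fun s => h + Vpot α U (u s))
      zero_le_one intervalIntegrable_const hVint hVlb
    simpa using this
  have hrhs : -α * h * r ^ 2 / (2 * (2 - α)) = (1/2 * r ^ 2) * c := by
    field_simp [hc]
    rw [hc]; field_simp
  constructor
  · rw [ge_iff_le, hrhs]
    refine mul_le_mul (by linarith) hB hcpos.le (by nlinarith)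
  · rw [hrhs]
    positivity
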